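/- Let L be a binary subword-closed language with Hom(L) < ∞ and Het(L) < ∞. Then h_L^{rd}(n) = O(1) and h_L^{ra}(n) = O(1); that is, there exists a constant c such that h_L^{rd}(n) ≤ c and h_L^{ra}(n) ≤ c for all natural n. -/

import Mathlib

/-- Binary words over the alphabet `E = {0,1}`, encoded as lists of booleans. -/
abbrev Word := List Bool

/-- A binary language `L` is subword-closed if every subsequence (sublist) of a word
of `L` belongs to `L`. -/
def SubwordClosed (L : Set Word) : Prop :=
  ∀ w ∈ L, ∀ u : Word, u.Sublist w → u ∈ L

/-- The word `a^m ā a^m`. -/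
def homWord (m : ℕ) (a : Bool) : Word :=
  List.replicate m a ++ [!a] ++ List.replicate m a

/-- `Hom(L) = ∞`: for every `m` there is a letter `a` with `a^m ā a^m ∈ L`. -/
def HomInf (L : Set Word) : Prop := ∀ m : ℕ, ∃ a : Bool, homWord m a ∈ L

/-- The word `a^m ā^m`. -/
def hetWord (m : ℕ) (a : Bool) : Word :=
  List.replicate m a ++ List.replicate m (!a)

/-- `Het(L) = ∞`: for every `m` there is a letter `a` with `a^m ā^m ∈ L`. -/
def HetInf (L : Set Word) : Prop := ∀ m : ℕ, ∃ a : Bool, hetWord m a ∈ L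

/-- The set `L(n)` of words of `L` of length `n`. -/
def LangAt (L : Set Word) (n : ℕ) : Set Word := {w : Word | w ∈ L ∧ w.length = n}

/-- Subtrees of decision trees over words of length `n`: a terminal node carrying a
label from `β`, or a node querying a (0-indexed) position together with a list of
outgoing edges, each labeled with a letter from `E` and leading to a subtree. -/
inductive NTree (β : Type) : Type where
  | leaf : β → NTree β
  | node : ℕ → List (Bool × NTree β) → NTree β

namespace NTree

variable {β : Type}

/-- All query positions are in `{0, …, n-1}` (i.e. attributes `l₁ⁿ,…,lₙⁿ`). -/
inductive Bounded (n : ℕ) : NTree β → Prop where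
  | leaf (b : β) : Bounded n (leaf b)
  | node (i : ℕ) (cs : List (Bool × NTree β)) :
      i < n → (∀ p ∈ cs, Bounded n p.2) → Bounded n (node i cs)

/-- The edges leaving every query node carry pairwise different labels. -/
inductive Det : NTree β → Prop where
  | leaf (b : β) : Det (leaf b)
  | node (i : ℕ) (cs : List (Bool × NTree β)) :
      cs.Pairwise (fun p q => p.1 ≠ q.1) → (∀ p ∈ cs, Det p.2) → Det (node i cs)

/-- `LeafLabel t b` holds iff some terminal node of `t` is labeled with `b`. -/
inductive LeafLabel : NTree β → β → Prop where
  | leaf (b : β) : LeafLabel (leaf b) b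
  | node (i : ℕ) (cs : List (Bool × NTree β)) (p : Bool × NTree β) (b : β) :
      p ∈ cs → LeafLabel p.2 b → LeafLabel (node i cs) b

/-- `Reaches w t b` holds iff there is a complete path of `t` consistent with the word
`w` whose terminal node is labeled with `b`: at every query node on the path, the label
of the edge taken equals the queried letter of `w`. -/
inductive Reaches (w : Word) : NTree β → β → Prop where
  | leaf (b : β) : Reaches w (leaf b) b
  | node (i : ℕ) (cs : List (Bool × NTree β)) (p : Bool × NTree β) (b : β) :
      p ∈ cs → w.getD i false = p.1 → Reaches w p.2 b → Reaches w (node i cs) b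

/-- `DepthLe t d`: every complete path of `t` contains at most `d` query nodes. -/
inductive DepthLe : NTree β → ℕ → Prop where
  | leaf (b : β) (d : ℕ) : DepthLe (leaf b) d
  | node (i : ℕ) (cs : List (Bool × NTree β)) (d : ℕ) :
      (∀ p ∈ cs, DepthLe p.2 d) → DepthLe (node i cs) (d + 1)

end NTree

/-- A decision tree: an (unlabeled) root together with the unlabeled edges leaving it,
each leading to a subtree. -/
structure DTree (β : Type) where
  roots : List (NTree β)

namespace DTree

variable {β : Type}

/-- The tree only uses attributes `l₁ⁿ,…,lₙⁿ` (0-indexed positions `< n`). -/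
def Bounded (n : ℕ) (Γ : DTree β) : Prop := ∀ t ∈ Γ.roots, NTree.Bounded n t

/-- Deterministic: exactly one edge leaves the root, and the edges leaving every
other node carry pairwise different labels. -/
def Det (Γ : DTree β) : Prop := Γ.roots.length = 1 ∧ ∀ t ∈ Γ.roots, NTree.Det t

/-- Some terminal node of `Γ` is labeled with `b`. -/
def LeafLabel (Γ : DTree β) (b : β) : Prop := ∃ t ∈ Γ.roots, NTree.LeafLabel t b

/-- Some complete path of `Γ` consistent with `w` ends in a terminal node labeled `b`. -/
def Reaches (Γ : DTree β) (w : Word) (b : β) : Prop := ∃ t ∈ Γ.roots, NTree.Reaches w t b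

/-- The depth of `Γ` (maximum number of query nodes on a complete path) is at most `d`. -/
def DepthLe (Γ : DTree β) (d : ℕ) : Prop := ∀ t ∈ Γ.roots, NTree.DepthLe t d

end DTree

/-- `Γ` solves the problem of recognition for `L(n)` nondeterministically: every
terminal node is labeled with a word of `L(n)`, every `w ∈ L(n)` is consistent with
some complete path, and every complete path consistent with a word `w ∈ L(n)` ends
in a terminal node labeled with `w`. -/
def SolvesRecNondet (L : Set Word) (n : ℕ) (Γ : DTree Word) : Prop :=
  Γ.Bounded n ∧
  (∀ b : Word, Γ.LeafLabel b → b ∈ L ∧ b.length = n) ∧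
  (∀ w ∈ L, w.length = n → ∃ b : Word, Γ.Reaches w b) ∧
  (∀ w ∈ L, w.length = n → ∀ b : Word, Γ.Reaches w b → b = w)

/-- `Γ` solves the problem of recognition for `L(n)` deterministically. -/
def SolvesRecDet (L : Set Word) (n : ℕ) (Γ : DTree Word) : Prop :=
  Γ.Det ∧ SolvesRecNondet L n Γ

/-- `Γ` solves the problem of membership for `L(n)` nondeterministically: every word
of length `n` is consistent with some complete path, and every complete path
consistent with a word `w` of length `n` ends in a terminal node labeled `1`
(i.e. `true`) if `w ∈ L(n)` and `0` (i.e. `false`) otherwise. -/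
def SolvesMemNondet (L : Set Word) (n : ℕ) (Γ : DTree Bool) : Prop :=
  Γ.Bounded n ∧
  (∀ w : Word, w.length = n → ∃ b : Bool, Γ.Reaches w b) ∧
  (∀ w : Word, w.length = n → ∀ b : Bool, Γ.Reaches w b → (b = true ↔ w ∈ L))

/-- `Γ` solves the problem of membership for `L(n)` deterministically. -/
def SolvesMemDet (L : Set Word) (n : ℕ) (Γ : DTree Bool) : Prop :=
  Γ.Det ∧ SolvesMemNondet L n Γ

open Classical in
/-- `h_L^{rd}(n)`: the minimum depth of a decision tree solving the problem of
recognition for `L(n)` deterministically (`0` if `L(n) = ∅`). -/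
noncomputable def hrd (L : Set Word) (n : ℕ) : ℕ :=
  if LangAt L n = ∅ then 0
  else sInf {d : ℕ | ∃ Γ : DTree Word, SolvesRecDet L n Γ ∧ Γ.DepthLe d}

open Classical in
/-- `h_L^{ra}(n)`: the minimum depth of a decision tree solving the problem of
recognition for `L(n)` nondeterministically (`0` if `L(n) = ∅`). -/
noncomputable def hra (L : Set Word) (n : ℕ) : ℕ :=
  if LangAt L n = ∅ then 0
  else sInf {d : ℕ | ∃ Γ : DTree Word, SolvesRecNondet L n Γ ∧ Γ.DepthLe d}

open Classical in
/-- `h_L^{md}(n)`: the minimum depth of a decision tree solving the problem of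
membership for `L(n)` deterministically (`0` if `L(n) = ∅`). -/
noncomputable def hmd (L : Set Word) (n : ℕ) : ℕ :=
  if LangAt L n = ∅ then 0
  else sInf {d : ℕ | ∃ Γ : DTree Bool, SolvesMemDet L n Γ ∧ Γ.DepthLe d}

open Classical in
/-- `h_L^{ma}(n)`: the minimum depth of a decision tree solving the problem of
membership for `L(n)` nondeterministically (`0` if `L(n) = ∅`). -/
noncomputable def hma (L : Set Word) (n : ℕ) : ℕ :=
  if LangAt L n = ∅ then 0
  else sInf {d : ℕ | ∃ Γ : DTree Bool, SolvesMemNondet L n Γ ∧ Γ.DepthLe d}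


-- ===== Auxiliary material =====

lemma count_add_count (w : Word) (a : Bool) : w.count a + w.count (!a) = w.length := by
  induction w with
  | nil => simp
  | cons b t ih =>
    have hba : (b = a ∧ b ≠ !a) ∨ (b ≠ a ∧ b = !a) := by cases a <;> cases b <;> simp
    rcases hba with ⟨h1, h2⟩ | ⟨h1, h2⟩ <;> simp [List.count_cons, h1, h2] <;> omega

lemma count_take_exists (a : Bool) (w : Word) (m : ℕ) (h : m ≤ w.count a) :
    ∃ k ≤ w.length, (w.take k).count a = m := by
  induction w generalizing m with
  | nil => exact ⟨0, by simp, by simp at h ⊢; omega⟩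
  | cons b t ih =>
    rcases Nat.eq_zero_or_pos m with rfl | hm
    · exact ⟨0, by simp⟩
    by_cases hb : b = a
    · obtain ⟨k, hk, hck⟩ := ih (m := m - 1) (by simp [List.count_cons, hb] at h; omega)
      exact ⟨k + 1, by simpa using hk, by simp [List.count_cons, hb, hck]; omega⟩
    · obtain ⟨k, hk, hck⟩ := ih (m := m) (by simp [List.count_cons, hb] at h; omega)
      exact ⟨k + 1, by simpa using hk, by simp [List.count_cons, hb, hck]⟩

lemma count_take_add_drop (w : Word) (a : Bool) (k : ℕ) :
    (w.take k).count a + (w.drop k).count a = w.count a := by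
  conv_rhs => rw [← List.take_append_drop k w]
  rw [List.count_append]

lemma het_sublist (w : Word) (m : ℕ) (h0 : 2*m ≤ w.count true) (h1 : 2*m ≤ w.count false) :
    ∃ a, (hetWord m a).Sublist w := by
  obtain ⟨k, hk, hck⟩ := count_take_exists true w m (by omega)
  have hsplit := count_take_add_drop w true k
  have hsplit' := count_take_add_drop w false k
  have hdrop : m ≤ (w.drop k).count true := by omega
  rcases le_or_gt m ((w.take k).count false) with hf | hf
  · refine ⟨false, ?_⟩
    have h1' : (List.replicate m false).Sublist (w.take k) := (List.replicate_sublist_iff).2 hf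
    have h2' : (List.replicate m true).Sublist (w.drop k) := (List.replicate_sublist_iff).2 hdrop
    have := (h1'.append h2')
    rw [List.take_append_drop] at this
    simpa [hetWord] using this
  · refine ⟨true, ?_⟩
    have hf' : m ≤ (w.drop k).count false := by omega
    have h1' : (List.replicate m true).Sublist (w.take k) := (List.replicate_sublist_iff).2 (by omega)
    have h2' : (List.replicate m false).Sublist (w.drop k) := (List.replicate_sublist_iff).2 hf'
    have := (h1'.append h2')
    rw [List.take_append_drop] at this
    simpa [hetWord] using this

lemma hom_sublist (w : Word) (a : Bool) (m k : ℕ) (hk : k < w.length)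
    (hka : w.getD k false = !a)
    (h1 : m ≤ (w.take k).count a) (h2 : m ≤ (w.drop (k+1)).count a) :
    (homWord m a).Sublist w := by
  have hsplit : w = w.take k ++ w[k] :: w.drop (k+1) := by
    conv_lhs => rw [← List.take_append_drop k w]
    rw [List.drop_eq_getElem_cons hk]
  have hget : w[k] = !a := by rw [← hka, List.getD_eq_getElem _ _ hk]
  have s1 : (List.replicate m a).Sublist (w.take k) := (List.replicate_sublist_iff).2 h1
  have s2 : (List.replicate m a).Sublist (w.drop (k+1)) := (List.replicate_sublist_iff).2 h2
  have : (List.replicate m a ++ [!a] ++ List.replicate m a).Sublist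
      (w.take k ++ [w[k]] ++ w.drop (k+1)) := by
    refine List.Sublist.append (List.Sublist.append s1 ?_) s2
    simp [hget]
  have h2' : (homWord m a).Sublist (w.take k ++ w[k] :: w.drop (k+1)) := by
    simpa [homWord] using this
  rw [← hsplit] at h2'
  exact h2'

lemma middle_eq (L : Set Word) (hL : SubwordClosed L) (m : ℕ)
    (hhom : ∀ a, homWord m a ∉ L) (hhet : ∀ a, hetWord m a ∉ L)
    (w : Word) (hw : w ∈ L) :
    ∃ a : Bool, ∀ k, 3*m ≤ k → k + 3*m + 1 ≤ w.length → w.getD k false = a := by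
  have hmin : w.count true < 2*m ∨ w.count false < 2*m := by
    by_contra hc
    push_neg at hc
    obtain ⟨a, ha⟩ := het_sublist w m hc.1 hc.2
    exact hhet a (hL w hw _ ha)
  have key : ∀ a : Bool, w.count (!a) < 2*m →
      ∀ k, 3*m ≤ k → k + 3*m + 1 ≤ w.length → w.getD k false = a := by
    intro a hmaj k hk1 hk2
    by_contra hne
    have hka : w.getD k false = !a := by cases a <;> revert hne <;> cases hwk : w.getD k false <;> simp_all
    have hkl : k < w.length := by omega
    have htl : (w.take k).length = k := by simp; omega
    have hta := count_add_count (w.take k) a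
    have hda := count_add_count (w.drop (k+1)) a
    have hmt : (w.take k).count (!a) ≤ w.count (!a) := (List.take_sublist _ _).count_le _
    have hmd : (w.drop (k+1)).count (!a) ≤ w.count (!a) := (List.drop_sublist _ _).count_le _
    have hdl : (w.drop (k+1)).length = w.length - (k+1) := by simp
    have h1 : m ≤ (w.take k).count a := by omega
    have h2 : m ≤ (w.drop (k+1)).count a := by omega
    exact hhom a (hL w hw _ (hom_sublist w a m k hkl hka h1 h2))
  rcases hmin with hmin | hmin
  · exact ⟨false, key false (by simpa using hmin)⟩
  · exact ⟨true, key true (by simpa using hmin)⟩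

def buildT (f : (ℕ → Bool) → Word) : List ℕ → (ℕ → Bool) → NTree Word
  | [], g => .leaf (f g)
  | i :: qs, g => .node i [(true, buildT f qs (Function.update g i true)),
                           (false, buildT f qs (Function.update g i false))]

def mergeOn (qs : List ℕ) (w : Word) (g : ℕ → Bool) : ℕ → Bool :=
  fun x => if x ∈ qs then w.getD x false else g x

lemma mergeOn_nil (w : Word) (g : ℕ → Bool) : mergeOn [] w g = g := by
  funext x; simp [mergeOn]

lemma mem_pair {α : Type*} {p x y : α} (hp : p ∈ [x, y]) : p = x ∨ p = y := by
  simpa using hp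

lemma mergeOn_cons (i : ℕ) (qs : List ℕ) (w : Word) (g : ℕ → Bool) :
    mergeOn (i :: qs) w g = mergeOn qs w (Function.update g i (w.getD i false)) := by
  funext x
  by_cases hq : x ∈ qs
  · simp [mergeOn, hq]
  · by_cases hx : x = i <;> simp [mergeOn, hq, hx, Function.update]

lemma buildT_bounded (f : (ℕ → Bool) → Word) (n : ℕ) :
    ∀ qs : List ℕ, (∀ i ∈ qs, i < n) → ∀ g, NTree.Bounded n (buildT f qs g) := by
  intro qs
  induction qs with
  | nil => intro _ g; exact NTree.Bounded.leaf _
  | cons i qs ih =>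
    intro h g
    refine NTree.Bounded.node _ _ (h i (by simp)) ?_
    rintro p hp
    rcases mem_pair hp with rfl | rfl <;> exact ih (fun j hj => h j (by simp [hj])) _

lemma buildT_det (f : (ℕ → Bool) → Word) :
    ∀ qs : List ℕ, ∀ g, NTree.Det (buildT f qs g) := by
  intro qs
  induction qs with
  | nil => intro g; exact NTree.Det.leaf _
  | cons i qs ih =>
    intro g
    refine NTree.Det.node _ _ (by simp) ?_
    rintro p hp
    rcases mem_pair hp with rfl | rfl <;> exact ih _

lemma buildT_depth (f : (ℕ → Bool) → Word) :
    ∀ qs : List ℕ, ∀ g, NTree.DepthLe (buildT f qs g) qs.length := by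
  intro qs
  induction qs with
  | nil => intro g; exact NTree.DepthLe.leaf _ _
  | cons i qs ih =>
    intro g
    refine NTree.DepthLe.node _ _ _ ?_
    rintro p hp
    rcases mem_pair hp with rfl | rfl <;> exact ih _

lemma buildT_leafLabel (f : (ℕ → Bool) → Word) :
    ∀ qs : List ℕ, ∀ g b, NTree.LeafLabel (buildT f qs g) b → ∃ g', b = f g' := by
  intro qs
  induction qs with
  | nil =>
    intro g b h
    cases h with
    | leaf => exact ⟨g, rfl⟩
  | cons i qs ih =>
    intro g b h
    cases h with
    | node _ _ p _ hp hl =>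
      rcases mem_pair hp with rfl | rfl <;> exact ih _ _ hl

lemma buildT_reaches (f : (ℕ → Bool) → Word) (w : Word) :
    ∀ qs : List ℕ, ∀ g, NTree.Reaches w (buildT f qs g) (f (mergeOn qs w g)) := by
  intro qs
  induction qs with
  | nil => intro g; rw [mergeOn_nil]; exact NTree.Reaches.leaf (f g)
  | cons i qs ih =>
    intro g
    rw [mergeOn_cons]
    cases hwi : w.getD i false
    · exact NTree.Reaches.node i _ (false, buildT f qs (Function.update g i false)) _
        (by simp) hwi (by simpa [hwi] using ih (Function.update g i false))
    · exact NTree.Reaches.node i _ (true, buildT f qs (Function.update g i true)) _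
        (by simp) hwi (by simpa [hwi] using ih (Function.update g i true))

lemma buildT_reaches_eq (f : (ℕ → Bool) → Word) (w : Word) :
    ∀ qs : List ℕ, ∀ g b, NTree.Reaches w (buildT f qs g) b → b = f (mergeOn qs w g) := by
  intro qs
  induction qs with
  | nil =>
    intro g b h
    cases h with
    | leaf => rw [mergeOn_nil]
  | cons i qs ih =>
    intro g b h
    rw [mergeOn_cons]
    cases h with
    | node _ _ p _ hp hwi hr =>
      rcases mem_pair hp with rfl | rfl <;> simp only at hwi <;> rw [hwi] <;> exact ih _ _ hr


lemma depthLe_mono {β : Type} {t : NTree β} :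
    ∀ {d d' : ℕ}, NTree.DepthLe t d → d ≤ d' → NTree.DepthLe t d' := by
  intro d d' h
  induction h generalizing d' with
  | leaf b d => intro _; exact NTree.DepthLe.leaf _ _
  | node i cs d h ih =>
    intro hdd'
    obtain ⟨e, rfl⟩ : ∃ e, d' = e + 1 := ⟨d' - 1, by omega⟩
    exact NTree.DepthLe.node i cs e (fun p hp => ih p hp (by omega))

lemma homWord_mono {m m' : ℕ} {a : Bool} (h : m ≤ m') :
    (homWord m a).Sublist (homWord m' a) := by
  unfold homWord
  exact (((List.replicate_sublist_replicate a).2 h).append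
    (List.Sublist.refl [!a])).append ((List.replicate_sublist_replicate a).2 h)

lemma hetWord_mono {m m' : ℕ} {a : Bool} (h : m ≤ m') :
    (hetWord m a).Sublist (hetWord m' a) := by
  unfold hetWord
  exact ((List.replicate_sublist_replicate a).2 h).append
    ((List.replicate_sublist_replicate (!a)).2 h)

/-- The queried positions: a prefix and a suffix window. -/
def qsL (m n : ℕ) : List ℕ :=
  ((Finset.range n).filter (fun i => i < 3*m+1 ∨ n ≤ i + (3*m+2))).sort (· ≤ ·)

lemma mem_qsL {m n i : ℕ} :
    i ∈ qsL m n ↔ i < n ∧ (i < 3*m+1 ∨ n ≤ i + (3*m+2)) := by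
  simp [qsL, Finset.mem_sort, Finset.mem_filter, Finset.mem_range]

lemma qsL_length (m n : ℕ) : (qsL m n).length ≤ 6*m+3 := by
  have h1 : (qsL m n).length =
      ((Finset.range n).filter (fun i => i < 3*m+1 ∨ n ≤ i + (3*m+2))).card :=
    Finset.length_sort _
  rw [h1, Finset.filter_or]
  refine le_trans (Finset.card_union_le _ _) ?_
  have h2 : (Finset.range n).filter (fun i => i < 3*m+1) ⊆ Finset.range (3*m+1) := by
    intro i hi
    simp only [Finset.mem_filter, Finset.mem_range] at hi ⊢
    exact hi.2
  have h3 : (Finset.range n).filter (fun i => n ≤ i + (3*m+2)) ⊆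
      Finset.Ico (n - (3*m+2)) n := by
    intro i hi
    simp only [Finset.mem_filter, Finset.mem_range, Finset.mem_Ico] at hi ⊢
    omega
  have c2 := Finset.card_le_card h2
  have c3 := Finset.card_le_card h3
  rw [Finset.card_range] at c2
  rw [Nat.card_Ico] at c3
  omega

lemma unique_of_agree (L : Set Word) (hL : SubwordClosed L) (m : ℕ)
    (hhom : ∀ a, homWord m a ∉ L) (hhet : ∀ a, hetWord m a ∉ L)
    (n : ℕ) (w v : Word) (hw : w ∈ L) (hwl : w.length = n)
    (hv : v ∈ L) (hvl : v.length = n)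
    (hagree : ∀ i ∈ qsL m n, w.getD i false = v.getD i false) : w = v := by
  obtain ⟨a, hwa⟩ := middle_eq L hL m hhom hhet w hw
  obtain ⟨a', hva⟩ := middle_eq L hL m hhom hhet v hv
  apply List.ext_getElem (by omega)
  intro i h1 h2
  rw [← List.getD_eq_getElem w false h1, ← List.getD_eq_getElem v false h2]
  by_cases hq : i ∈ qsL m n
  · exact hagree i hq
  · have hin : i < n := by omega
    have h3 : 3*m+1 ≤ i ∧ i + (3*m+2) < n := by
      rw [mem_qsL] at hq
      push_neg at hq
      exact hq hin
    have h3m : (3*m) ∈ qsL m n := mem_qsL.2 ⟨by omega, Or.inl (by omega)⟩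
    have e1 : w.getD i false = a := hwa i (by omega) (by omega)
    have e2 : w.getD (3*m) false = a := hwa (3*m) le_rfl (by omega)
    have e3 : v.getD i false = a' := hva i (by omega) (by omega)
    have e4 : v.getD (3*m) false = a' := hva (3*m) le_rfl (by omega)
    have e5 := hagree (3*m) h3m
    rw [e1, e3, ← e2, ← e4, e5]

/-- **Theorem 1(c).** If `L` is a binary subword-closed language with `Hom(L) < ∞`
and `Het(L) < ∞`, then `h_L^{rd}(n) = O(1)` and `h_L^{ra}(n) = O(1)`. -/
theorem recognition_hom_finite_het_finite (L : Set Word) (hL : SubwordClosed L)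
    (hhom : ¬ HomInf L) (hhet : ¬ HetInf L) :
    ∃ c : ℕ, ∀ n : ℕ, hrd L n ≤ c ∧ hra L n ≤ c :=  by
  classical
  have hhom' : ∃ m1, ∀ a, homWord m1 a ∉ L := by
    unfold HomInf at hhom; push_neg at hhom; exact hhom
  have hhet' : ∃ m2, ∀ a, hetWord m2 a ∉ L := by
    unfold HetInf at hhet; push_neg at hhet; exact hhet
  obtain ⟨m1, hm1⟩ := hhom'
  obtain ⟨m2, hm2⟩ := hhet'
  set m := max m1 m2 with hm
  have hhomm : ∀ a, homWord m a ∉ L := fun a h =>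
    hm1 a (hL _ h _ (homWord_mono (le_max_left m1 m2)))
  have hhetm : ∀ a, hetWord m a ∉ L := fun a h =>
    hm2 a (hL _ h _ (hetWord_mono (le_max_right m1 m2)))
  refine ⟨6*m+3, fun n => ?_⟩
  by_cases hemp : LangAt L n = ∅
  · constructor <;> simp [hrd, hra, hemp]
  · obtain ⟨w₀, hw₀⟩ := Set.nonempty_iff_ne_empty.2 hemp
    set qs := qsL m n with hqs
    set f : (ℕ → Bool) → Word := fun g =>
      if h : ∃ w, w ∈ LangAt L n ∧ ∀ i ∈ qs, w.getD i false = g i then h.choose else w₀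
      with hf
    have hfmem : ∀ g, f g ∈ LangAt L n := by
      intro g
      by_cases h : ∃ w, w ∈ LangAt L n ∧ ∀ i ∈ qs, w.getD i false = g i
      · rw [hf]; dsimp only; rw [dif_pos h]; exact h.choose_spec.1
      · rw [hf]; dsimp only; rw [dif_neg h]; exact hw₀
    have hfw : ∀ w ∈ LangAt L n, ∀ g, f (mergeOn qs w g) = w := by
      intro w hw g
      have hex : ∃ u, u ∈ LangAt L n ∧ ∀ i ∈ qs, u.getD i false = mergeOn qs w g i :=
        ⟨w, hw, fun i hi => by simp [mergeOn, hi]⟩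
      rw [hf]; dsimp only; rw [dif_pos hex]
      have hc := hex.choose_spec
      refine unique_of_agree L hL m hhomm hhetm n _ w hc.1.1 hc.1.2 hw.1 hw.2 ?_
      intro i hi
      rw [hc.2 i hi]
      simp [mergeOn, hi, hqs]
    set g₀ : ℕ → Bool := fun _ => false
    set Γ : DTree Word := ⟨[buildT f qs g₀]⟩ with hΓ
    have hbdd : ∀ i ∈ qs, i < n := fun i hi => (mem_qsL.1 hi).1
    have hsolN : SolvesRecNondet L n Γ := by
      refine ⟨?_, ?_, ?_, ?_⟩
      · intro t ht
        simp only [hΓ, List.mem_singleton] at ht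
        subst ht
        exact buildT_bounded f n qs hbdd g₀
      · rintro b ⟨t, ht, hl⟩
        simp only [hΓ, List.mem_singleton] at ht
        subst ht
        obtain ⟨g', rfl⟩ := buildT_leafLabel f qs g₀ b hl
        exact hfmem g'
      · intro w hw hwn
        exact ⟨f (mergeOn qs w g₀), buildT f qs g₀, by simp [hΓ], buildT_reaches f w qs g₀⟩
      · rintro w hw hwn b ⟨t, ht, hr⟩
        simp only [hΓ, List.mem_singleton] at ht
        subst ht
        rw [buildT_reaches_eq f w qs g₀ b hr]
        exact hfw w ⟨hw, hwn⟩ g₀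
    have hsolD : SolvesRecDet L n Γ := by
      refine ⟨⟨by simp [hΓ], ?_⟩, hsolN⟩
      intro t ht
      simp only [hΓ, List.mem_singleton] at ht
      subst ht
      exact buildT_det f qs g₀
    have hdep : Γ.DepthLe (6*m+3) := by
      intro t ht
      simp only [hΓ, List.mem_singleton] at ht
      subst ht
      exact depthLe_mono (buildT_depth f qs g₀) (by simpa [hqs] using qsL_length m n)
    constructor
    · rw [hrd, if_neg hemp]
      exact Nat.sInf_le ⟨Γ, hsolD, hdep⟩
    · rw [hra, if_neg hemp]
      exact Nat.sInf_le ⟨Γ, hsolN, hdep⟩
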